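/- For every σ > 0 and every integer d ≥ 1, the quantity γ := (1/d)·Σ_{j=0}^{d−1} 1/(1 + 2σ − 2σ·cos(2πj/d)) satisfies γ = (1 + ω^d) / ((1 − ω^d)·√(4σ+1)), where moreover 0 < ω < 1. -/

import Mathlib

open Complex Finset Real

lemma sum_inv_one_sub_root (d : ℕ) (u η : ℂ)
    (hu : u ^ d = 1) (hu' : ∀ n : ℕ, 0 < n → n < d → u ^ n ≠ 1)
    (hη : η ^ d ≠ 1) :
    ∑ j : Fin d, 1 / (1 - η * u ^ (j : ℕ)) = d / (1 - η ^ d) := by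
  have h1 : (1 : ℂ) - η ^ d ≠ 0 := fun h => hη (by linear_combination -h)
  have hterm : ∀ j : Fin d, 1 / (1 - η * u ^ (j : ℕ))
      = (∑ n ∈ range d, (η * u ^ (j : ℕ)) ^ n) / (1 - η ^ d) := by
    intro j
    have hxd : (η * u ^ (j : ℕ)) ^ d = η ^ d := by
      rw [mul_pow, ← pow_mul, mul_comm (j : ℕ) d, pow_mul, hu, one_pow, mul_one]
    have hx1 : (1 : ℂ) - η * u ^ (j : ℕ) ≠ 0 := by
      intro h
      have : η * u ^ (j : ℕ) = 1 := by linear_combination -h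
      rw [this, one_pow] at hxd
      exact hη hxd.symm
    rw [div_eq_div_iff hx1 h1, one_mul]
    have := geom_sum_mul (η * u ^ (j : ℕ)) d
    rw [hxd] at this
    linear_combination this
  rw [Finset.sum_congr rfl (fun j _ => hterm j), ← Finset.sum_div]
  congr 1
  rw [Fin.sum_univ_eq_sum_range (fun j => ∑ n ∈ range d, (η * u ^ j) ^ n)]
  rw [Finset.sum_comm]
  have : ∀ n ∈ range d, ∑ j ∈ range d, (η * u ^ j) ^ n
      = if n = 0 then (d : ℂ) else 0 := by
    intro n hn
    rcases Nat.eq_zero_or_pos n with h0 | h0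
    · simp [h0]
    · rw [if_neg h0.ne']
      have : ∀ j, (η * u ^ j) ^ n = η ^ n * (u ^ n) ^ j := by
        intro j; rw [mul_pow, ← pow_mul, mul_comm j n, pow_mul]
      simp_rw [this, ← Finset.mul_sum]
      rw [geom_sum_eq (hu' n h0 (Finset.mem_range.mp hn)), ← pow_mul,
        mul_comm n d, pow_mul, hu, one_pow]
      simp
  rw [Finset.sum_congr rfl this]
  simp only [Finset.sum_ite_eq', Finset.mem_range]
  split
  · rfl
  · next h => simp [Nat.eq_zero_of_not_pos (fun hp => h hp)]

lemma exp_mul_I_add_exp_neg_mul_I (x : ℝ) :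
    Complex.exp ((x : ℂ) * Complex.I) + Complex.exp (((-x : ℝ) : ℂ) * Complex.I)
      = 2 * ((Real.cos x : ℝ) : ℂ) := by
  rw [Complex.exp_mul_I, Complex.exp_mul_I, ← Complex.ofReal_cos, ← Complex.ofReal_sin,
    ← Complex.ofReal_cos, ← Complex.ofReal_sin, Real.cos_neg, Real.sin_neg]
  push_cast
  ring

theorem gamma_closed_form (σ : ℝ) (hσ : 0 < σ) (d : ℕ) (hd : 1 ≤ d) :
    let ω : ℝ := (2 * σ + 1 - Real.sqrt (4 * σ + 1)) / (2 * σ)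
    0 < ω ∧ ω < 1 ∧
    (1 / d : ℝ) * ∑ j : Fin d, 1 / (1 + 2 * σ - 2 * σ * Real.cos (2 * Real.pi * j.val / d))
      = (1 + ω ^ d) / ((1 - ω ^ d) * Real.sqrt (4 * σ + 1)) := by
  intro ω
  have hω : ω = (2 * σ + 1 - Real.sqrt (4 * σ + 1)) / (2 * σ) := rfl
  set s := Real.sqrt (4 * σ + 1) with hs_def
  have hs0 : 0 < s := Real.sqrt_pos.mpr (by linarith)
  have hs_sq : s ^ 2 = 4 * σ + 1 := Real.sq_sqrt (by linarith)
  have hs_gt1 : 1 < s := by nlinarith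
  have hslt : s < 2 * σ + 1 := by nlinarith
  have hω_pos : 0 < ω := by rw [hω]; exact div_pos (by linarith) (by linarith)
  have hω_lt1 : ω < 1 := by rw [hω, div_lt_one (by linarith)]; linarith
  refine ⟨hω_pos, hω_lt1, ?_⟩
  -- key algebraic relations
  have hkey0 : (2 * σ + 1 + s) * ω = 2 * σ := by
    rw [hω]; field_simp; linear_combination -hs_sq
  have hq : σ * ω ^ 2 - (2 * σ + 1) * ω + σ = 0 := by
    rw [hω]; field_simp; ring_nf; nlinarith [hs_sq]
  have h1 : σ * (1 - ω ^ 2) = s * ω := by linear_combination -hq - hkey0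
  have h2 : σ * (1 + ω ^ 2) = (2 * σ + 1) * ω := by linear_combination hq
  have hωd_lt1 : ω ^ d < 1 := pow_lt_one₀ hω_pos.le hω_lt1 (by omega)
  have hωd_pos : 0 < ω ^ d := pow_pos hω_pos d
  -- complex setup
  have hd0 : (d : ℂ) ≠ 0 := Nat.cast_ne_zero.mpr (by omega)
  have hdR : (0 : ℝ) < d := by exact_mod_cast Nat.pos_of_ne_zero (by omega)
  set ζ : ℂ := Complex.exp (2 * Real.pi * Complex.I / d) with hζ_def
  have hπ : (Real.pi : ℂ) ≠ 0 := Complex.ofReal_ne_zero.mpr Real.pi_ne_zero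
  have hζd : ζ ^ d = 1 := by
    rw [hζ_def, ← Complex.exp_nat_mul,
      show (d : ℂ) * (2 * Real.pi * Complex.I / d) = 2 * Real.pi * Complex.I by
        field_simp]
    exact_mod_cast Complex.exp_two_pi_mul_I
  have hζn : ∀ n : ℕ, 0 < n → n < d → ζ ^ n ≠ 1 := by
    intro n hn hnd h
    rw [hζ_def, ← Complex.exp_nat_mul, Complex.exp_eq_one_iff] at h
    obtain ⟨k, hk⟩ := h
    have h2πI : (2 : ℂ) * Real.pi * Complex.I ≠ 0 :=
      mul_ne_zero (mul_ne_zero two_ne_zero hπ) Complex.I_ne_zero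
    have hnk : (n : ℂ) = k * d := by
      have hmul : (n : ℂ) * (2 * Real.pi * Complex.I) = (k * d) * (2 * Real.pi * Complex.I) := by
        have := congrArg (· * (d : ℂ)) hk
        field_simp at this
        linear_combination (2 * Real.pi * Complex.I) * this
      exact mul_right_cancel₀ h2πI hmul
    have hnk' : (n : ℤ) = k * d := by exact_mod_cast hnk
    have hdz : (0 : ℤ) < d := by exact_mod_cast Nat.pos_of_ne_zero (by omega)
    have hnz : (0 : ℤ) < n := by exact_mod_cast hn
    have hndz : (n : ℤ) < d := by exact_mod_cast hnd
    have hk1 : 1 ≤ k := by nlinarith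
    nlinarith
  have hζ0 : ζ ≠ 0 := Complex.exp_ne_zero _
  have hωdC : ((ω : ℂ)) ^ d ≠ 1 := by
    intro h
    have : (ω : ℝ) ^ d = 1 := by exact_mod_cast h
    linarith
  have S1 := sum_inv_one_sub_root d ζ (ω : ℂ) hζd hζn hωdC
  have hζinvd : (ζ⁻¹) ^ d = 1 := by rw [inv_pow, hζd, inv_one]
  have hζinvn : ∀ n : ℕ, 0 < n → n < d → (ζ⁻¹) ^ n ≠ 1 := by
    intro n hn hnd h
    rw [inv_pow, inv_eq_one] at h
    exact hζn n hn hnd h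
  have S2 := sum_inv_one_sub_root d ζ⁻¹ (ω : ℂ) hζinvd hζinvn hωdC
  -- per-term identity
  have hA_pos : ∀ j : Fin d, 0 < 1 + 2 * σ - 2 * σ * Real.cos (2 * Real.pi * j.val / d) := by
    intro j
    nlinarith [Real.cos_le_one (2 * Real.pi * j.val / d), Real.neg_one_le_cos (2 * Real.pi * j.val / d)]
  have hej : ∀ j : ℕ, ζ ^ j = Complex.exp ((2 * Real.pi * j / d : ℝ) * Complex.I) := by
    intro j
    rw [hζ_def, ← Complex.exp_nat_mul]
    congr 1
    push_cast
    ring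
  have habs : ∀ j : ℕ, ‖ζ ^ j‖ = 1 := by
    intro j; rw [hej]; exact Complex.norm_exp_ofReal_mul_I _
  have perterm : ∀ j : Fin d,
      ((s : ℂ)) / ((1 + 2 * σ - 2 * σ * Real.cos (2 * Real.pi * j.val / d) : ℝ) : ℂ)
        = 1 / (1 - (ω : ℂ) * ζ ^ (j : ℕ)) + 1 / (1 - (ω : ℂ) * (ζ⁻¹) ^ (j : ℕ)) - 1 := by
    intro j
    set θ : ℝ := 2 * Real.pi * j.val / d with hθ_def
    set c : ℝ := Real.cos θ with hc_def
    set e : ℂ := ζ ^ (j : ℕ) with he_def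
    set f : ℂ := (ζ⁻¹) ^ (j : ℕ) with hf_def
    have hef : e * f = 1 := by
      rw [he_def, hf_def, inv_pow]
      exact mul_inv_cancel₀ (pow_ne_zero _ hζ0)
    have hfe : f = Complex.exp (((-θ : ℝ)) * Complex.I) := by
      rw [hf_def, inv_pow, hej, ← Complex.exp_neg]
      congr 1
      simp only [hθ_def]
      push_cast
      ring
    have hc2 : e + f = 2 * (c : ℂ) := by
      rw [he_def, hej, hfe]
      exact exp_mul_I_add_exp_neg_mul_I θ
    have habse : ‖e‖ = 1 := habs _
    have habsf : ‖f‖ = 1 := by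
      rw [hf_def, inv_pow, norm_inv, habs, inv_one]
    have he0 : 1 - (ω : ℂ) * e ≠ 0 := by
      intro h
      have h1' : (ω : ℂ) * e = 1 := by linear_combination -h
      have := congrArg norm h1'
      rw [norm_mul, habse, mul_one, Complex.norm_real, Real.norm_eq_abs, abs_of_pos hω_pos, norm_one] at this
      linarith
    have hf0 : 1 - (ω : ℂ) * f ≠ 0 := by
      intro h
      have h1' : (ω : ℂ) * f = 1 := by linear_combination -h
      have := congrArg norm h1'
      rw [norm_mul, habsf, mul_one, Complex.norm_real, Real.norm_eq_abs, abs_of_pos hω_pos, norm_one] at this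
      linarith
    have hA0 : ((1 + 2 * σ - 2 * σ * c : ℝ) : ℂ) ≠ 0 :=
      Complex.ofReal_ne_zero.mpr (hA_pos j).ne'
    have h1c : (σ : ℂ) * (1 - (ω : ℂ) ^ 2) = (s : ℂ) * (ω : ℂ) := by exact_mod_cast h1
    have h2c : (σ : ℂ) * (1 + (ω : ℂ) ^ 2) = (2 * σ + 1 : ℂ) * (ω : ℂ) := by
      push_cast
      exact_mod_cast h2
    have hprod : (1 - (ω : ℂ) * e) * (1 - (ω : ℂ) * f) = 1 - 2 * (ω : ℂ) * (c : ℂ) + (ω : ℂ) ^ 2 := by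
      linear_combination ((ω : ℂ)) ^ 2 * hef - (ω : ℂ) * hc2
    have hσC : (σ : ℂ) ≠ 0 := Complex.ofReal_ne_zero.mpr hσ.ne'
    have hkey : (s : ℂ) * (1 - 2 * (ω : ℂ) * (c : ℂ) + (ω : ℂ) ^ 2)
        = (1 - (ω : ℂ) ^ 2) * ((1 + 2 * σ - 2 * σ * c : ℝ) : ℂ) := by
      apply mul_left_cancel₀ hσC
      push_cast
      linear_combination (s : ℂ) * h2c - ((1 : ℂ) + 2 * σ - 2 * σ * c) * h1c
    have hrhs : 1 / (1 - (ω : ℂ) * e) + 1 / (1 - (ω : ℂ) * f) - 1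
        = (1 - (ω : ℂ) ^ 2) / ((1 - (ω : ℂ) * e) * (1 - (ω : ℂ) * f)) := by
      rw [div_add_div _ _ he0 hf0, div_sub_one (mul_ne_zero he0 hf0)]
      congr 1
      linear_combination -((ω : ℂ)) ^ 2 * hef
    rw [hrhs, div_eq_div_iff hA0 (mul_ne_zero he0 hf0)]
    linear_combination (s : ℂ) * hprod + hkey
  -- sum it up
  have hωd1 : (1 : ℂ) - (ω : ℂ) ^ d ≠ 0 := fun h => hωdC (by linear_combination -h)
  have hsum : ∑ j : Fin d,
      ((s : ℂ)) / ((1 + 2 * σ - 2 * σ * Real.cos (2 * Real.pi * j.val / d) : ℝ) : ℂ)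
      = (d : ℂ) * (1 + (ω : ℂ) ^ d) / (1 - (ω : ℂ) ^ d) := by
    rw [Finset.sum_congr rfl (fun j _ => perterm j)]
    rw [Finset.sum_sub_distrib, Finset.sum_add_distrib, S1, S2]
    simp only [Finset.sum_const, Finset.card_univ, Fintype.card_fin, nsmul_eq_mul, mul_one]
    field_simp
    ring
  -- back to the reals
  have hsC : (s : ℂ) ≠ 0 := Complex.ofReal_ne_zero.mpr hs0.ne'
  have hreal : (∑ j : Fin d, s / (1 + 2 * σ - 2 * σ * Real.cos (2 * Real.pi * j.val / d)))
      = d * (1 + ω ^ d) / (1 - ω ^ d) := by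
    apply Complex.ofReal_injective
    rw [Complex.ofReal_sum]
    simp only [Complex.ofReal_div]
    rw [hsum]
    push_cast
    ring
  have hne : (1 : ℝ) - ω ^ d ≠ 0 := by linarith
  have hsT : s * (∑ j : Fin d, 1 / (1 + 2 * σ - 2 * σ * Real.cos (2 * Real.pi * j.val / d)))
      = d * (1 + ω ^ d) / (1 - ω ^ d) := by
    rw [Finset.mul_sum]
    simp only [mul_one_div]
    exact hreal
  have hT : (∑ j : Fin d, 1 / (1 + 2 * σ - 2 * σ * Real.cos (2 * Real.pi * j.val / d)))
      = d * (1 + ω ^ d) / ((1 - ω ^ d) * s) := by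
    rw [eq_div_iff (mul_ne_zero hne hs0.ne')]
    field_simp at hsT ⊢
    linear_combination hsT
  rw [hT]
  field_simp
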